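/- arXiv:1909.13491 — 5 statements merged into one kernel-verified Lean document; each statement's English description precedes it below -/
import Mathlib

section
/- Let n and D be integers. There exists an integral binary quadratic form f(x,y) = A x^2 + 2 B x y + C y^2 (with A, B, C ∈ ℤ) of determinant A C − B^2 = D such that the equation f(x,y) = n has a primitive integer solution, if and only if the congruence −z^2 ≡ D (mod n) has an integer solution, i.e., there exists z ∈ ℤ with n ∣ z^2 + D. -/
/-- An integral binary quadratic form `A x² + 2 B x y + C y²` of determinant
`A C − B² = D` represents `n` primitively iff `−z² ≡ D (mod n)` is solvable. -/
theorem quadratic_form_primitive_representation_iff (n D : ℤ) :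
    (∃ A B C x y : ℤ, A * C - B ^ 2 = D ∧
      A * x ^ 2 + 2 * B * x * y + C * y ^ 2 = n ∧ IsCoprime x y) ↔
    ∃ z : ℤ, n ∣ z ^ 2 + D := by
  constructor
  · rintro ⟨A, B, C, x, y, hD, hn, hxy⟩
    obtain ⟨u, v, h⟩ := hxy
    refine ⟨-A*x*v + B*(x*u - y*v) + C*y*u, A*v^2 - 2*B*u*v + C*u^2, ?_⟩
    linear_combination (A*v^2 - 2*B*u*v + C*u^2) * hn +
      (-(u*x + v*y)^2) * hD - D*(u*x + v*y + 1) * h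
  · rintro ⟨z, c, hc⟩
    exact ⟨n, z, c, 1, 0, by linarith, by ring, isCoprime_one_left⟩
end

section
/- For every pair of coprime positive integers p and q there exist integers a₁, a₂, l, t₁, t₂ such that p·(t₁·t₂ − l^2) + q·(t₂·a₁^2 − 2·l·a₁·a₂ + t₁·a₂^2) = 1 or = −1; equivalently, the determinant of the 3×3 integer matrix with rows (p, −q·a₁, −q·a₂), (a₁, t₁, l), (a₂, l, t₂) equals ±1. (This is the algebraic content of Theorem 2: every lens space L(p,q) is a closure of a homology cobordism over the planar surface Σ_{0,3}.) -/
open jacobiSym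

/-- Key lemma: `J(-p | 8p-1) = -1` for `p ≥ 1`. -/
theorem key_jacobi (p : ℕ) (hp : 0 < p) : jacobiSym (-(p : ℤ)) (8 * p - 1) = -1 := by
  set h : ℕ := 8 * p - 1 with hh
  have hh2 : h % 2 = 1 := by omega
  have hh4 : h % 4 = 3 := by omega
  have hh8 : h % 8 = 7 := by omega
  have hho : Odd h := Nat.odd_iff.mpr hh2
  -- factor p = 2^e * m
  set e : ℕ := p.factorization 2 with he
  set m : ℕ := p / 2 ^ e with hm
  have hfact : 2 ^ e * m = p := Nat.ordProj_mul_ordCompl_eq_self p 2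
  have hmodd : Odd m := Nat.odd_iff.mpr (Nat.two_dvd_ne_zero.mp
    (Nat.not_dvd_ordCompl Nat.prime_two hp.ne'))
  have hmdvd : (m : ℤ) ∣ 8 * p := by
    exact_mod_cast Dvd.dvd.mul_left (Dvd.intro_left _ hfact) 8
  -- χ values at h
  have hχ4 : ZMod.χ₄ h = -1 := ZMod.χ₄_nat_three_mod_four hh4
  have hχ8 : ZMod.χ₈ h = 1 := by
    rw [ZMod.χ₈_nat_mod_eight, hh8]; decide
  -- J(m | h) = 1
  have hJh_m : jacobiSym ((h : ℤ)) m = ZMod.χ₄ m := by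
    have : ((h : ℤ)) % m = (-1) % m := by
      apply Int.ModEq.eq
      have : ((h : ℤ)) - (-1) = 8 * p := by
        have : (h : ℤ) = 8 * p - 1 := by push_cast [hh]; omega
        rw [this]; ring
      exact (Int.modEq_iff_dvd.mpr (this ▸ hmdvd)).symm
    rw [jacobiSym.mod_left' this, jacobiSym.at_neg_one hmodd]
  have hJm : jacobiSym (m : ℤ) h = 1 := by
    rw [jacobiSym.quadratic_reciprocity hmodd hho, hJh_m]
    have hh2' : h / 2 = 4 * p - 1 := by omega
    rcases Nat.odd_mod_four_iff.mp (Nat.odd_iff.mp hmodd) with h1 | h3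
    · rw [ZMod.χ₄_nat_one_mod_four h1]
      have : Even (m / 2 * (h / 2)) := (Nat.even_iff.mpr (by omega)).mul_right _
      rw [this.neg_one_pow]; ring
    · rw [ZMod.χ₄_nat_three_mod_four h3]
      have hodd1 : Odd (m / 2) := by
        rcases Nat.odd_iff.mp hmodd with _; exact Nat.odd_iff.mpr (by omega)
      have hodd2 : Odd (h / 2) := by rw [hh2']; exact Nat.odd_iff.mpr (by omega)
      rw [(hodd1.mul hodd2).neg_one_pow]; ring
  -- assemble
  have hps : (p : ℤ) = (2 : ℤ) ^ e * (m : ℤ) := by exact_mod_cast hfact.symm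
  calc jacobiSym (-(p : ℤ)) h = jacobiSym (-1 * (p : ℤ)) h := by rw [neg_one_mul]
    _ = jacobiSym (-1) h * jacobiSym ((p : ℤ)) h := jacobiSym.mul_left _ _ _
    _ = -1 * (jacobiSym 2 h ^ e * jacobiSym (m : ℤ) h) := by
        rw [jacobiSym.at_neg_one hho, hχ4, hps, jacobiSym.mul_left, ← jacobiSym.pow_left]
    _ = -1 := by rw [jacobiSym.at_two hho, hχ8, hJm]; ring

/-- Theorem 2 (algebraic form): for coprime positive `p`, `q` the determinant
`|[p, −q a₁, −q a₂; a₁, t₁, l; a₂, l, t₂]| = ±1` has an integer solution. -/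
theorem lens_space_sigma03_realizable (p q : ℕ) (hp : 0 < p) (hq : 0 < q)
    (hpq : Nat.Coprime p q) :
    ∃ a₁ a₂ l t₁ t₂ : ℤ,
      (p : ℤ) * (t₁ * t₂ - l ^ 2) + (q : ℤ) * (t₂ * a₁ ^ 2 - 2 * l * a₁ * a₂ + t₁ * a₂ ^ 2) = 1 ∨
      (p : ℤ) * (t₁ * t₂ - l ^ 2) + (q : ℤ) * (t₂ * a₁ ^ 2 - 2 * l * a₁ * a₂ + t₁ * a₂ ^ 2) = -1 := by
  haveI : NeZero p := ⟨hp.ne'⟩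
  -- Bezout coefficient g : q * g ≡ 1 (mod p)
  obtain ⟨g, u, hgu⟩ : ∃ g u : ℤ, (q : ℤ) * g + (p : ℤ) * u = 1 := by
    obtain ⟨a, b, hab⟩ := Nat.isCoprime_iff_coprime.mpr hpq.symm
    exact ⟨a, b, by linarith⟩
  have hqg1 : ((q : ℕ) : ZMod p) * ((g : ℤ) : ZMod p) = 1 := by
    have := congrArg (fun z : ℤ => ((z : ℤ) : ZMod p)) hgu
    push_cast at this
    rwa [ZMod.natCast_self, zero_mul, add_zero] at this
  -- odd positive representative q' of q mod p
  set q' : ℕ := if q % 2 = 1 then q else q + p with hq'def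
  have hpodd_of : q % 2 = 0 → p % 2 = 1 := by
    intro hqe
    rcases Nat.even_or_odd p with hpe | hpo
    · exfalso
      have h2 : 2 ∣ Nat.gcd p q := Nat.dvd_gcd hpe.two_dvd (by omega)
      rw [hpq] at h2; omega
    · exact Nat.odd_iff.mp hpo
  have hq'odd : Odd q' := by
    by_cases hc : q % 2 = 1
    · simpa [hq'def, hc] using Nat.odd_iff.mpr hc
    · have := hpodd_of (by omega)
      simp only [hq'def, if_neg hc]
      exact Nat.odd_iff.mpr (by omega)
  have hq'cop : Nat.Coprime q' p := by
    by_cases hc : q % 2 = 1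
    · simpa [hq'def, hc] using hpq.symm
    · simp only [hq'def, if_neg hc]
      simpa using (Nat.coprime_add_mul_left_left q p 1).mpr hpq.symm
  have hq'Z : ((q' : ℕ) : ZMod p) = ((q : ℕ) : ZMod p) := by
    by_cases hc : q % 2 = 1
    · simp [hq'def, hc]
    · simp [hq'def, hc, ZMod.natCast_self]
  -- the helper h = 8p - 1
  set h : ℕ := 8 * p - 1 with hhdef
  have hhodd : Odd h := Nat.odd_iff.mpr (by omega)
  have hhcop : Nat.Coprime h p := by
    have hd : Nat.gcd h p ∣ 1 := by
      have h1 : Nat.gcd h p ∣ 8 * p := Dvd.dvd.mul_left (Nat.gcd_dvd_right h p) 8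
      have h2 : Nat.gcd h p ∣ h := Nat.gcd_dvd_left h p
      have := Nat.dvd_sub h1 h2
      simpa [hhdef, show 8 * p - (8 * p - 1) = 1 by omega] using this
    exact Nat.dvd_one.mp hd
  have hhZ : ((h : ℕ) : ZMod p) = -1 := by
    have hcast : ((h : ℕ) : ℤ) = 8 * (p : ℤ) - 1 := by push_cast [hhdef]; omega
    have := congrArg (fun z : ℤ => ((z : ℤ) : ZMod p)) hcast
    push_cast at this
    rwa [ZMod.natCast_self, mul_zero, zero_sub] at this
  -- choose n and s
  have hq'gcd : Int.gcd (-(p : ℤ)) (q' : ℕ) = 1 := by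
    simpa [Int.gcd] using hq'cop.symm
  obtain ⟨n, s, hnodd, hncop, hn1, hs2, hclass⟩ :
      ∃ (n : ℕ) (s : ℤ), Odd n ∧ Nat.Coprime n p ∧ jacobiSym (-(p : ℤ)) n = 1 ∧ s * s = 1 ∧
        (((q : ℤ) * g ^ 2 * s * (n : ℕ) : ℤ) : ZMod p) = 1 := by
    rcases jacobiSym.eq_one_or_neg_one hq'gcd with hJ | hJ
    · refine ⟨q', 1, hq'odd, hq'cop, hJ, by ring, ?_⟩
      push_cast
      rw [hq'Z]
      linear_combination (((q : ℕ) : ZMod p) * ((g : ℤ) : ZMod p) + 1) * hqg1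
    · have hq'ne : q' ≠ 0 := by rcases hq'odd with ⟨k, hk⟩; omega
      refine ⟨q' * h, -1, hq'odd.mul hhodd, hq'cop.mul hhcop, ?_, by ring, ?_⟩
      · rw [jacobiSym.mul_right' _ hq'ne (show h ≠ 0 by omega), hJ, key_jacobi p hp]
        ring
      · push_cast
        rw [hq'Z, hhZ]
        linear_combination ((((q : ℕ) : ZMod p) * ((g : ℤ) : ZMod p)) + 1) * hqg1
  -- Dirichlet: prime r ≡ n (mod 4p), r > 4p
  haveI : NeZero (4 * p) := ⟨by omega⟩
  have hn4p : Nat.Coprime n (4 * p) := by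
    have h2 : Nat.Coprime n 2 :=
      ((Nat.Prime.coprime_iff_not_dvd Nat.prime_two).mpr (by
        intro hdvd; exact (Nat.not_odd_iff_even.mpr (even_iff_two_dvd.mpr hdvd)) hnodd)).symm
    have h4 : Nat.Coprime n 4 := by
      have := h2.mul_right h2; simpa [show (2:ℕ)*2 = 4 by norm_num] using this
    exact h4.mul_right hncop
  have hnunit : IsUnit ((n : ℕ) : ZMod (4 * p)) := (ZMod.isUnit_iff_coprime n (4 * p)).mpr hn4p
  obtain ⟨r, hrgt, hrprime, hrmod⟩ := Nat.forall_exists_prime_gt_and_eq_mod hnunit (4 * p)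
  haveI : Fact r.Prime := ⟨hrprime⟩
  haveI : NeZero r := ⟨hrprime.pos.ne'⟩
  have hrmodeq : r ≡ n [MOD 4 * p] := (ZMod.natCast_eq_natCast_iff _ _ _).mp hrmod
  have hrodd : Odd r := by
    have h2 : r ≡ n [MOD 2] := hrmodeq.of_dvd ⟨2 * p, by ring⟩
    have := Nat.odd_iff.mp hnodd
    exact Nat.odd_iff.mpr (by unfold Nat.ModEq at h2; omega)
  -- J(-p | r) = 1, so -p is a square mod r
  have hJr : jacobiSym (-(p : ℤ)) r = 1 := by
    have hmr := jacobiSym.mod_right (-(p : ℤ)) hrodd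
    have hmn := jacobiSym.mod_right (-(p : ℤ)) hnodd
    rw [Int.natAbs_neg, Int.natAbs_natCast] at hmr hmn
    rw [hmr, show r % (4 * p) = n % (4 * p) from hrmodeq, ← hmn]
    exact hn1
  obtain ⟨c, hc⟩ := ZMod.isSquare_of_jacobiSym_eq_one hJr
  have hpner : ((p : ℕ) : ZMod r) ≠ 0 := by
    rw [Ne, ZMod.natCast_eq_zero_iff]
    intro hdvd
    have := Nat.le_of_dvd hp hdvd
    omega
  -- β with p β² ≡ -1 (mod r)
  set d : ZMod r := c * ((p : ℕ) : ZMod r)⁻¹ with hd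
  set β : ℤ := (d.val : ℤ) with hβ
  have hβcast : ((β : ℤ) : ZMod r) = d := by
    rw [hβ]; push_cast; exact ZMod.natCast_rightInverse d
  have hcc : c * c = -((p : ℕ) : ZMod r) := by
    rw [← hc]; push_cast; ring
  have hpβ : ((p : ℕ) : ZMod r) * ((β : ℤ) : ZMod r) ^ 2 = -1 := by
    rw [hβcast, hd]
    have h1 : ((p : ℕ) : ZMod r) * (((p : ℕ) : ZMod r))⁻¹ = 1 := mul_inv_cancel₀ hpner
    calc ((p : ℕ) : ZMod r) * (c * (((p : ℕ) : ZMod r))⁻¹) ^ 2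
        = (c * c) * ((((p : ℕ) : ZMod r))⁻¹ * (((p : ℕ) : ZMod r) * (((p : ℕ) : ZMod r))⁻¹)) := by
          ring
      _ = (-((p : ℕ) : ZMod r)) * ((((p : ℕ) : ZMod r))⁻¹ * 1) := by rw [hcc, h1]
      _ = -(((p : ℕ) : ZMod r) * (((p : ℕ) : ZMod r))⁻¹) := by ring
      _ = -1 := by rw [h1]
  -- divisibility D1 : p ∣ 1 - q g² s r
  have hrZp : ((r : ℕ) : ZMod p) = ((n : ℕ) : ZMod p) :=
    (ZMod.natCast_eq_natCast_iff _ _ _).mpr (hrmodeq.of_dvd ⟨4, by ring⟩)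
  have hD1 : (p : ℤ) ∣ 1 - (q : ℤ) * g ^ 2 * s * (r : ℕ) := by
    rw [← ZMod.intCast_zmod_eq_zero_iff_dvd]
    push_cast
    push_cast at hclass
    rw [hrZp, hclass]
    ring
  obtain ⟨A, hA⟩ := hD1
  -- divisibility D2 : r ∣ A + β²
  have hD2 : (r : ℤ) ∣ A + β ^ 2 := by
    rw [← ZMod.intCast_zmod_eq_zero_iff_dvd]
    have hAr : ((p : ℕ) : ZMod r) * ((A : ℤ) : ZMod r) = 1 := by
      have := congrArg (fun z : ℤ => ((z : ℤ) : ZMod r)) hA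
      push_cast at this
      rw [ZMod.natCast_self, mul_zero, sub_zero] at this
      exact this.symm
    have hzero : ((p : ℕ) : ZMod r) * (((A : ℤ) : ZMod r) + ((β : ℤ) : ZMod r) ^ 2) = 0 := by
      rw [mul_add, hAr, hpβ]; ring
    have := (mul_eq_zero.mp hzero).resolve_left hpner
    push_cast
    exact this
  obtain ⟨w, hw⟩ := hD2
  -- assemble the witnesses
  refine ⟨g, 0, β, s * w, s * ((r : ℕ) : ℤ), Or.inl ?_⟩
  linear_combination ((p : ℤ) * w * ((r : ℕ) : ℤ)) * hs2 - (p : ℤ) * hw - hA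
end

section
/- Let D and M be integers with M ≠ 0. There exist integers t₁, t₂, l, a₁, a₂ with t₁·t₂ − l^2 = D and t₂·a₁^2 − 2·l·a₁·a₂ + t₁·a₂^2 = M if and only if there exist integers w ≠ 0 and z such that w^2 ∣ M and (M / w^2) ∣ z^2 + D. -/
/-- Representing `M ≠ 0` by a binary quadratic form of determinant `D` is possible
iff `w² ∣ M` and `−z² ≡ D (mod M / w²)` are solvable. -/
theorem represent_iff_congruence (D M : ℤ) (hM : M ≠ 0) :
    (∃ t₁ t₂ l a₁ a₂ : ℤ, t₁ * t₂ - l ^ 2 = D ∧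
      t₂ * a₁ ^ 2 - 2 * l * a₁ * a₂ + t₁ * a₂ ^ 2 = M) ↔
    ∃ w z : ℤ, w ≠ 0 ∧ w ^ 2 ∣ M ∧ (M / w ^ 2) ∣ z ^ 2 + D := by
  constructor
  · rintro ⟨t₁, t₂, l, a₁, a₂, hD, hM'⟩
    set w : ℤ := (Int.gcd a₁ a₂ : ℤ) with hw
    have hw0 : w ≠ 0 := by
      intro h
      have h1 : a₁ = 0 ∧ a₂ = 0 := Int.gcd_eq_zero_iff.mp (Int.natCast_eq_zero.mp h)
      apply hM
      rw [← hM', h1.1, h1.2]; ring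
    obtain ⟨x, hx⟩ : w ∣ a₁ := Int.gcd_dvd_left a₁ a₂
    obtain ⟨y, hy⟩ : w ∣ a₂ := Int.gcd_dvd_right a₁ a₂
    -- Bezout
    have hbez0 : w = a₁ * Int.gcdA a₁ a₂ + a₂ * Int.gcdB a₁ a₂ := Int.gcd_eq_gcd_ab a₁ a₂
    set u := Int.gcdA a₁ a₂
    set v := Int.gcdB a₁ a₂
    have hbez : x * u + y * v = 1 := by
      have : w * (x * u + y * v) = w * 1 := by
        rw [mul_one]
        nth_rewrite 2 [hbez0]
        rw [hx, hy]; ring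
      exact mul_left_cancel₀ hw0 this
    set m : ℤ := t₂ * x ^ 2 - 2 * l * x * y + t₁ * y ^ 2 with hm
    have hMm : M = w ^ 2 * m := by rw [← hM', hx, hy, hm]; ring
    have hsq : w ^ 2 ≠ 0 := pow_ne_zero _ hw0
    have hdiv : M / w ^ 2 = m := by rw [hMm, Int.mul_ediv_cancel_left _ hsq]
    refine ⟨w, -(t₂ * x * (-v) - l * (x * u + (-v) * y) + t₁ * y * u), hw0,
      ⟨m, hMm⟩, ?_⟩
    rw [hdiv]
    refine ⟨t₂ * v ^ 2 + 2 * l * u * v + t₁ * u ^ 2, ?_⟩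
    linear_combination -hD - (t₁ * t₂ - l ^ 2) * (x * u + y * v + 1) * hbez
  · rintro ⟨w, z, hw0, hw2, hz⟩
    obtain ⟨m, hm⟩ := hw2
    have hsq : w ^ 2 ≠ 0 := pow_ne_zero _ hw0
    have hdiv : M / w ^ 2 = m := by rw [hm, Int.mul_ediv_cancel_left _ hsq]
    rw [hdiv] at hz
    obtain ⟨k, hk⟩ := hz
    refine ⟨k, m, z, w, 0, ?_, ?_⟩
    · linear_combination -hk
    · rw [hm]; ring
end

section
/- Let p, q, r, s be positive integers with p·s − q·r = 1. Then there exists a nonnegative integer k such that either q + k·p is prime and q + k·p ≡ 3 (mod 4), or r + k·p is prime and r + k·p ≡ 3 (mod 4). -/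
/-- coprimality transfers along equal residues. -/
lemma cop_of_mod (b t p : ℕ) (hbt : b % p = t % p) (ht : Nat.Coprime t p) :
    Nat.Coprime b p := by
  have h1 : Nat.gcd p b = Nat.gcd p t := by
    rw [Nat.gcd_rec p b, Nat.gcd_rec p t, hbt]
  have h2 : Nat.gcd p t = 1 := ht.symm
  exact Nat.coprime_comm.mp (by rw [Nat.Coprime, h1, h2])

/-- Helper: if `b ≡ 3 (mod 4)`, `b ≡ t (mod p)`, and `b` is coprime to a modulus `N`
divisible by `4` and `p`, then Dirichlet's theorem gives `k` with `t + k*p` a prime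
congruent to `3` mod `4`. -/
lemma helper_dirichlet (N p t b : ℕ) (hN : 0 < N) (h4 : 4 ∣ N) (hpN : p ∣ N)
    (hb4 : b % 4 = 3) (hbt : b % p = t % p) (cop : Nat.Coprime b N) :
    ∃ k : ℕ, Nat.Prime (t + k * p) ∧ (t + k * p) % 4 = 3 := by
  haveI : NeZero N := ⟨hN.ne'⟩
  have hu : IsUnit ((b : ZMod N)) := (ZMod.isUnit_iff_coprime b N).mpr cop
  obtain ⟨P, hPt, hPp, hPmod⟩ := Nat.forall_exists_prime_gt_and_eq_mod hu t
  have hmod : P ≡ b [MOD N] := (ZMod.natCast_eq_natCast_iff _ _ _).mp hPmod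
  have h4' : P % 4 = 3 := by
    have := hmod.of_dvd h4
    simpa [Nat.ModEq, hb4] using this
  have hpmod : P % p = t % p := by
    have := hmod.of_dvd hpN
    simp only [Nat.ModEq] at this
    rw [this, hbt]
  have hle : t ≤ P := le_of_lt hPt
  have hdvd : p ∣ P - t := (Nat.modEq_iff_dvd' hle).mp hpmod.symm
  refine ⟨(P - t) / p, ?_⟩
  have hEq : t + (P - t) / p * p = P := by
    rw [Nat.div_mul_cancel hdvd, Nat.add_sub_cancel' hle]
  rw [hEq]
  exact ⟨hPp, h4'⟩

/-- For coprime positive `p, q, r, s` with `p s − q r = 1`, some `q + k p` or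
`r + k p` is a prime congruent to `3` mod `4`. -/
theorem exists_prime_three_mod_four (p q r s : ℕ)
    (hp : 0 < p) (hq : 0 < q) (hr : 0 < r) (hs : 0 < s)
    (h : (p : ℤ) * s - q * r = 1) :
    ∃ k : ℕ, (Nat.Prime (q + k * p) ∧ (q + k * p) % 4 = 3) ∨
             (Nat.Prime (r + k * p) ∧ (r + k * p) % 4 = 3) := by
  -- q and r are coprime to p
  have hcq : Nat.Coprime q p := by
    rw [← Nat.isCoprime_iff_coprime]
    exact ⟨-r, s, by push_cast; linarith⟩
  have hcr : Nat.Coprime r p := by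
    rw [← Nat.isCoprime_iff_coprime]
    exact ⟨-q, s, by push_cast; linarith⟩
  -- key fact: q*r + 1 = p*s in ℕ
  have hnat : q * r + 1 = p * s := by
    have : (q : ℤ) * r + 1 = p * s := by linarith
    exact_mod_cast this
  rcases Nat.even_or_odd p with hpe | hpo
  · -- p even: q and r are odd
    obtain ⟨m, hm⟩ := hpe
    have h2p : 2 ∣ p := ⟨m, by omega⟩
    have hqodd : q % 2 = 1 :=
      Nat.odd_iff.mp (Nat.coprime_two_right.mp (hcq.coprime_dvd_right h2p))
    have hrodd : r % 2 = 1 :=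
      Nat.odd_iff.mp (Nat.coprime_two_right.mp (hcr.coprime_dvd_right h2p))
    rcases Nat.even_or_odd m with hme | hmo
    · -- p ≡ 0 (mod 4): one of q, r is ≡ 3 (mod 4)
      obtain ⟨n, hn⟩ := hme
      have h4p : 4 ∣ p := ⟨n, by omega⟩
      have h4ps : 4 ∣ p * s := h4p.mul_right s
      have hqr4 : (q * r) % 4 = 3 := by omega
      have hqr4' : (q % 4) * (r % 4) % 4 = 3 := by
        rw [← Nat.mul_mod]; exact hqr4
      have hq4 : q % 4 < 4 := Nat.mod_lt _ (by norm_num)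
      have hr4 : r % 4 < 4 := Nat.mod_lt _ (by norm_num)
      have hq2 : q % 4 % 2 = 1 := by omega
      have hr2 : r % 4 % 2 = 1 := by omega
      have key : q % 4 = 3 ∨ r % 4 = 3 := by
        set a := q % 4 with ha
        set b := r % 4 with hb
        interval_cases a <;> interval_cases b <;> omega
      rcases key with hk | hk
      · obtain ⟨k, hk1, hk2⟩ := helper_dirichlet p p q q hp h4p dvd_rfl hk rfl hcq
        exact ⟨k, Or.inl ⟨hk1, hk2⟩⟩
      · obtain ⟨k, hk1, hk2⟩ := helper_dirichlet p p r r hp h4p dvd_rfl hk rfl hcr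
        exact ⟨k, Or.inr ⟨hk1, hk2⟩⟩
    · -- p ≡ 2 (mod 4): use modulus 2p, with b = q or q + p
      have hp4 : p % 4 = 2 := by obtain ⟨n, hn⟩ := hmo; omega
      have h42p : 4 ∣ 2 * p := ⟨(p - 2) / 4 * 2 + 1, by omega⟩
      have hp2p : p ∣ 2 * p := ⟨2, by ring⟩
      have h2ppos : 0 < 2 * p := by omega
      rcases eq_or_ne (q % 4) 3 with hq43 | hq41
      · have copb : Nat.Coprime q (2 * p) :=
          (Nat.coprime_two_right.mpr (Nat.odd_iff.mpr hqodd)).mul_right hcq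
        obtain ⟨k, hk1, hk2⟩ := helper_dirichlet (2 * p) p q q h2ppos h42p hp2p hq43 rfl copb
        exact ⟨k, Or.inl ⟨hk1, hk2⟩⟩
      · have hq41' : q % 4 = 1 := by omega
        have hb4 : (q + p) % 4 = 3 := by omega
        have hbt : (q + p) % p = q % p := Nat.add_mod_right q p
        have copp : Nat.Coprime (q + p) p := cop_of_mod (q + p) q p hbt hcq
        have hbodd : (q + p) % 2 = 1 := by omega
        have copb : Nat.Coprime (q + p) (2 * p) :=
          (Nat.coprime_two_right.mpr (Nat.odd_iff.mpr hbodd)).mul_right copp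
        obtain ⟨k, hk1, hk2⟩ :=
          helper_dirichlet (2 * p) p q (q + p) h2ppos h42p hp2p hb4 hbt copb
        exact ⟨k, Or.inl ⟨hk1, hk2⟩⟩
  · -- p odd: use CRT to find b ≡ 3 (mod 4), b ≡ q (mod p)
    have hco4p : Nat.Coprime 4 p := by
      have h2 : Nat.Coprime 2 p := Nat.coprime_two_left.mpr hpo
      exact (h2.mul h2 : Nat.Coprime (2 * 2) p)
    obtain ⟨b, hb3, hbq⟩ := Nat.chineseRemainder hco4p 3 q
    have hb4 : b % 4 = 3 := hb3
    have hbt : b % p = q % p := hbq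
    have copb : Nat.Coprime b (4 * p) := by
      have hbodd : b % 2 = 1 := by omega
      have c2 : Nat.Coprime b 2 := Nat.coprime_two_right.mpr (Nat.odd_iff.mpr hbodd)
      have c4 : Nat.Coprime b 4 := (c2.mul_right c2 : Nat.Coprime b (2 * 2))
      exact c4.mul_right (cop_of_mod b q p hbt hcq)
    obtain ⟨k, hk1, hk2⟩ :=
      helper_dirichlet (4 * p) p q b (by omega) ⟨p, rfl⟩ ⟨4, by ring⟩ hb4 hbt copb
    exact ⟨k, Or.inl ⟨hk1, hk2⟩⟩
end

section
/- Let p, q, r, s be positive integers with p·s − q·r = 1. Then there exist a nonnegative integer k, an integer z, and a sign ε ∈ {1, −1} such that either q + k·p is prime and (q + k·p) ∣ p − ε·z^2, or r + k·p is prime and (r + k·p) ∣ p − ε·z^2. (This establishes that condition (3) of the paper, with w = 1, can always be satisfied, yielding Theorem 2.) -/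
open ZMod

/-- `J(p | 4p - 1) = 1` for every positive `p`. -/
lemma jac_aux (p : ℕ) (hp : 0 < p) : jacobiSym (p : ℤ) (4 * p - 1) = 1 := by
  set B : ℕ := 4 * p - 1 with hBdef
  have hBodd : Odd B := Nat.odd_iff.mpr (by omega)
  obtain ⟨a, m, hm2, hpm⟩ := Nat.exists_eq_pow_mul_and_not_dvd hp.ne' 2 (by norm_num)
  have hmodd : Odd m := Nat.odd_iff.mpr (by omega)
  have hmp : m ∣ p := ⟨2 ^ a, by rw [hpm]; ring⟩
  -- J(B | m) = J(-1 | m) = χ₄ m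
  have hBm : jacobiSym (B : ℤ) m = χ₄ m := by
    have hBz : (B : ℤ) = 4 * (p : ℤ) - 1 := by omega
    have hdvd : (m : ℤ) ∣ (-1 : ℤ) - B := ⟨-(4 * 2 ^ a), by rw [hBz]; push_cast [hpm]; ring⟩
    rw [jacobiSym.mod_left' (Int.modEq_iff_dvd.mpr hdvd : (B : ℤ) % m = (-1) % m)]
    exact jacobiSym.at_neg_one hmodd
  -- J(m | B) = 1
  have hmB : jacobiSym (m : ℤ) B = 1 := by
    have hm4 : m % 4 = 1 ∨ m % 4 = 3 := by
      have := Nat.odd_iff.mp hmodd; omega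
    rcases hm4 with hm4 | hm4
    · rw [jacobiSym.quadratic_reciprocity_one_mod_four hm4 hBodd, hBm]
      exact ZMod.χ₄_nat_one_mod_four hm4
    · have hB4 : B % 4 = 3 := by omega
      rw [jacobiSym.quadratic_reciprocity_three_mod_four hm4 hB4, hBm,
        ZMod.χ₄_nat_three_mod_four hm4]
      norm_num
  -- assemble
  rw [hpm]
  push_cast
  rw [jacobiSym.mul_left, jacobiSym.pow_left, hmB, mul_one]
  rcases Nat.eq_zero_or_pos a with rfl | ha
  · simp
  · have hB8 : B % 8 = 7 := by
      have h2p : 2 ∣ p := by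
        rw [hpm]; exact Dvd.dvd.mul_right (dvd_pow_self 2 (by omega : a ≠ 0)) m
      omega
    rw [jacobiSym.at_two hBodd, ZMod.χ₈_nat_mod_eight, hB8]
    norm_num

/-- From a suitable odd residue class `b` mod `4p` on which `J(ε p | ·) = 1`,
Dirichlet's theorem produces the required prime `t + k * p`. -/
lemma finisher (p t : ℕ) (hp : 0 < p) (ε : ℤ) (hε : ε = 1 ∨ ε = -1)
    (b : ℕ) (hbodd : Odd b) (hbu : IsUnit ((b : ℕ) : ZMod (4 * p)))
    (hbt : ((b : ℕ) : ZMod p) = (t : ZMod p)) (hJ : jacobiSym (ε * p) b = 1) :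
    ∃ (k : ℕ) (z : ℤ), Nat.Prime (t + k * p) ∧
      ((t + k * p : ℕ) : ℤ) ∣ (p : ℤ) - ε * z ^ 2 := by
  haveI : NeZero (4 * p) := ⟨by omega⟩
  obtain ⟨P, hPgt, hPp, hPmod⟩ := Nat.forall_exists_prime_gt_and_eq_mod hbu (t + 4 * p)
  have hmodeq : P ≡ b [MOD 4 * p] := (ZMod.natCast_eq_natCast_iff _ _ _).mp hPmod
  have hPodd : Odd P := by
    have h2 : P ≡ b [MOD 2] := hmodeq.of_dvd ⟨2 * p, by ring⟩
    have := Nat.odd_iff.mp hbodd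
    exact Nat.odd_iff.mpr (by unfold Nat.ModEq at h2; omega)
  have hna : (ε * (p : ℤ)).natAbs = p := by rcases hε with rfl | rfl <;> simp
  have hJP : jacobiSym (ε * p) P = 1 := by
    have h1 := jacobiSym.mod_right (ε * p) hPodd
    have h2 := jacobiSym.mod_right (ε * p) hbodd
    rw [hna] at h1 h2
    rw [h1, hmodeq, ← h2, hJ]
  haveI : Fact P.Prime := ⟨hPp⟩
  have hleg : legendreSym P (ε * p) = 1 := by
    rw [jacobiSym.legendreSym.to_jacobiSym]; exact_mod_cast hJP
  have hne : ((ε * (p : ℤ) : ℤ) : ZMod P) ≠ 0 := by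
    intro h0
    rw [(legendreSym.eq_zero_iff P _).mpr h0] at hleg
    exact one_ne_zero hleg.symm
  obtain ⟨c, hc⟩ := (legendreSym.eq_one_iff P hne).mp hleg
  -- find k
  have hPt : P ≡ t [MOD p] := by
    have h2 : P ≡ b [MOD p] := hmodeq.of_dvd ⟨4, by ring⟩
    exact h2.trans ((ZMod.natCast_eq_natCast_iff _ _ _).mp hbt)
  have htP : t ≤ P := by omega
  obtain ⟨k, hk⟩ := (Nat.modEq_iff_dvd' htP).mp hPt.symm
  have hPk : t + k * p = P := by rw [mul_comm]; omega
  refine ⟨k, (c.val : ℤ), by rw [hPk]; exact hPp, ?_⟩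
  rw [hPk, ← ZMod.intCast_zmod_eq_zero_iff_dvd]
  push_cast at hc ⊢
  rw [ZMod.natCast_val, ZMod.cast_id]
  have hε2 : ((ε : ZMod P)) ^ 2 = 1 := by rcases hε with rfl | rfl <;> norm_num
  linear_combination (ε : ZMod P) * hc - (p : ZMod P) * hε2

/-- Condition (3) of the paper with `w = 1`: there are `k`, `z`, `ε = ±1` such that
`q + k p` or `r + k p` is prime and divides `p − ε z²`. -/
theorem condition_three_satisfiable (p q r s : ℕ)
    (hp : 0 < p) (hq : 0 < q) (hr : 0 < r) (hs : 0 < s)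
    (h : (p : ℤ) * s - q * r = 1) :
    ∃ (k : ℕ) (z ε : ℤ), (ε = 1 ∨ ε = -1) ∧
      ((Nat.Prime (q + k * p) ∧ ((q + k * p : ℕ) : ℤ) ∣ (p : ℤ) - ε * z ^ 2) ∨
       (Nat.Prime (r + k * p) ∧ ((r + k * p : ℕ) : ℤ) ∣ (p : ℤ) - ε * z ^ 2)) := by
  haveI : NeZero (4 * p) := ⟨by omega⟩
  -- q is coprime to p
  have hqp : Nat.Coprime q p := by
    rw [← Nat.isCoprime_iff_coprime]
    exact ⟨-r, s, by linear_combination h⟩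
  -- a representative c₁ ≡ q (mod p) which is odd and coprime to p
  obtain ⟨c₁, hc₁odd, hc₁q, hc₁p⟩ :
      ∃ c : ℕ, Odd c ∧ ((c : ℕ) : ZMod p) = (q : ZMod p) ∧ Nat.Coprime c p := by
    rcases Nat.even_or_odd q with hqe | hqo
    · have hpodd : Odd p := by
        rcases Nat.even_or_odd p with hpe | hpo
        · exfalso
          have h2 : (2 : ℕ) ∣ Nat.gcd q p :=
            Nat.dvd_gcd hqe.two_dvd hpe.two_dvd
          rw [hqp] at h2
          omega
        · exact hpo
      exact ⟨q + p, hqe.add_odd hpodd,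
        by push_cast [ZMod.natCast_self]; ring,
        by simpa using (Nat.coprime_add_self_right).mpr hqp⟩
    · exact ⟨q, hqo, rfl, hqp⟩
  have hc₁u : IsUnit ((c₁ : ℕ) : ZMod (4 * p)) := by
    rw [ZMod.isUnit_iff_coprime]
    have h4 : Nat.Coprime c₁ 4 := by
      have h2 : Nat.Coprime c₁ 2 := Nat.coprime_comm.mp
        ((Nat.prime_two.coprime_iff_not_dvd).mpr
          (by have := Nat.odd_iff.mp hc₁odd; omega))
      simpa using h2.pow_right 2
    exact h4.mul_right hc₁p
  set u₁ : (ZMod (4 * p))ˣ := hc₁u.unit with hu₁def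
  set u₂ : (ZMod (4 * p))ˣ := -u₁⁻¹ with hu₂def
  set b : ℕ := (u₂ : ZMod (4 * p)).val with hbdef
  have hbval : ((b : ℕ) : ZMod (4 * p)) = (u₂ : ZMod (4 * p)) := by
    rw [hbdef, ZMod.natCast_val, ZMod.cast_id]
  have hprod : ((b : ℕ) : ZMod (4 * p)) * ((c₁ : ℕ) : ZMod (4 * p)) = -1 := by
    rw [hbval, ← hc₁u.unit_spec, ← hu₁def, ← Units.val_mul, hu₂def,
      neg_mul, inv_mul_cancel]
    simp
  have hbu : IsUnit ((b : ℕ) : ZMod (4 * p)) := by rw [hbval]; exact u₂.isUnit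
  -- b is odd
  have hbodd : Odd b := by
    have hmap := congrArg (ZMod.castHom (show (2 : ℕ) ∣ 4 * p from ⟨2 * p, by ring⟩) (ZMod 2))
      hprod
    have hc₁2 : ((c₁ : ℕ) : ZMod 2) = 1 := by
      have := Nat.odd_iff.mp hc₁odd
      rw [show ((c₁ : ℕ) : ZMod 2) = ((c₁ % 2 : ℕ) : ZMod 2) by
        rw [ZMod.natCast_eq_natCast_iff']; omega, this]
      norm_num
    simp only [map_mul, map_natCast, map_neg, map_one, hc₁2, mul_one] at hmap
    have : b % 2 = 1 % 2 := by
      rw [← ZMod.natCast_eq_natCast_iff', hmap]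
      decide
    exact Nat.odd_iff.mpr (by omega)
  -- b ≡ r (mod p)
  have hbr : ((b : ℕ) : ZMod p) = (r : ZMod p) := by
    have hmap := congrArg (ZMod.castHom (show (p : ℕ) ∣ 4 * p from ⟨4, by ring⟩) (ZMod p))
      hprod
    simp only [map_mul, map_natCast, map_neg, map_one, hc₁q] at hmap
    have hqr : (q : ZMod p) * (r : ZMod p) = -1 := by
      have := congrArg (fun z : ℤ => (z : ZMod p)) h
      push_cast [ZMod.natCast_self] at this
      linear_combination -this
    have hqu : IsUnit ((q : ℕ) : ZMod p) := (ZMod.isUnit_iff_coprime q p).mpr hqp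
    have : ((q : ℕ) : ZMod p) * ((b : ℕ) : ZMod p) = ((q : ℕ) : ZMod p) * (r : ZMod p) := by
      rw [mul_comm ((q : ℕ) : ZMod p) ((b : ℕ) : ZMod p), hmap, hqr]
    exact hqu.mul_left_cancel this
  -- the Jacobi symbols multiply to 1
  haveI : NeZero b := ⟨by have := Nat.odd_iff.mp hbodd; omega⟩
  haveI : NeZero c₁ := ⟨by have := Nat.odd_iff.mp hc₁odd; omega⟩
  have hBodd : Odd (4 * p - 1) := Nat.odd_iff.mpr (by omega)
  have hJmul : jacobiSym (p : ℤ) b * jacobiSym (p : ℤ) c₁ = 1 := by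
    rw [← jacobiSym.mul_right]
    have hbcodd : Odd (b * c₁) := hbodd.mul hc₁odd
    have hmod : (b * c₁) % (4 * p) = (4 * p - 1) % (4 * p) := by
      rw [← ZMod.natCast_eq_natCast_iff', Nat.cast_mul, hprod,
        Nat.cast_sub (show 1 ≤ 4 * p by omega), ZMod.natCast_self, Nat.cast_one]
      ring
    have h1 := jacobiSym.mod_right (p : ℤ) hbcodd
    have h2 := jacobiSym.mod_right (p : ℤ) hBodd
    rw [Int.natAbs_natCast] at h1 h2
    rw [h1, hmod, ← h2]
    exact jac_aux p hp
  rcases Int.mul_eq_one_iff_eq_one_or_neg_one.mp hJmul with ⟨hJb, hJc⟩ | ⟨hJb, hJc⟩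
  · -- both symbols are 1 : use ε = 1 with class of q
    obtain ⟨k, z, hk1, hk2⟩ := finisher p q hp 1 (Or.inl rfl) c₁ hc₁odd hc₁u hc₁q
      (by rw [one_mul]; exact hJc)
    exact ⟨k, z, 1, Or.inl rfl, Or.inl ⟨hk1, hk2⟩⟩
  · -- both symbols are -1 : use ε = -1 with whichever class is 3 mod 4
    have hmap := congrArg (ZMod.castHom (show (4 : ℕ) ∣ 4 * p from ⟨p, rfl⟩) (ZMod 4)) hprod
    simp only [map_mul, map_natCast, map_neg, map_one] at hmap
    have hχmul : χ₄ ((b : ℕ) : ZMod 4) * χ₄ ((c₁ : ℕ) : ZMod 4) = -1 := by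
      rw [← map_mul, hmap]
      decide
    have hb4 : b % 4 = 1 ∨ b % 4 = 3 := by have := Nat.odd_iff.mp hbodd; omega
    rcases hb4 with hb4 | hb4
    · -- then χ₄ c₁ = -1, use class of q
      have hχc : (χ₄ ((c₁ : ℕ) : ZMod 4) : ℤ) = -1 := by
        have hχb : (χ₄ ((b : ℕ) : ZMod 4) : ℤ) = 1 := ZMod.χ₄_nat_one_mod_four hb4
        rw [hχb, one_mul] at hχmul
        exact hχmul
      obtain ⟨k, z, hk1, hk2⟩ := finisher p q hp (-1) (Or.inr rfl) c₁ hc₁odd hc₁u hc₁q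
        (by rw [neg_one_mul, jacobiSym.neg _ hc₁odd, hχc, hJc]; ring)
      exact ⟨k, z, -1, Or.inr rfl, Or.inl ⟨hk1, hk2⟩⟩
    · -- χ₄ b = -1, use class of r
      have hχb : (χ₄ ((b : ℕ) : ZMod 4) : ℤ) = -1 := ZMod.χ₄_nat_three_mod_four hb4
      obtain ⟨k, z, hk1, hk2⟩ := finisher p r hp (-1) (Or.inr rfl) b hbodd hbu hbr
        (by rw [neg_one_mul, jacobiSym.neg _ hbodd, hχb, hJb]; ring)
      exact ⟨k, z, -1, Or.inr rfl, Or.inr ⟨hk1, hk2⟩⟩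
end
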